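/- Let P be a constant-coefficient skew-symmetric differential operator on ℝ (P* = −P) and h, u smooth rapidly decaying functions. Then (Λ^s(h P u), Λ^s u)_{L²} = ([Λ^s, h] P u, Λ^s u)_{L²} − (1/2)([P, h] Λ^s u, Λ^s u)_{L²}, where Λ = (1−∂_x²)^{1/2}. -/

import Mathlib

open MeasureTheory Real

/-- The (real part of the) Bessel potential operator `Λ^s = (1 - ∂_x²)^{s/2}` acting on real
functions, via the Fourier multiplier with symbol `(1 + ξ²)^{s/2}`. -/
noncomputable def lamR (s : ℝ) (f : ℝ → ℝ) : ℝ → ℝ :=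
  fun x => (FourierTransformInv.fourierInv
    (fun ξ => ((1 + ξ ^ 2) ^ (s / 2) : ℝ) • FourierTransform.fourier (fun y => (f y : ℂ)) ξ) x).re

/-- A constant-coefficient differential operator `P = ∑ a i ∂_x^i`. -/
noncomputable def diffOp (n : ℕ) (a : ℕ → ℝ) (f : ℝ → ℝ) : ℝ → ℝ :=
  fun x => ∑ i ∈ Finset.range (n + 1), a i * iteratedDeriv i f x

open Polynomial Complex SchwartzMap
open scoped FourierTransform

section weight

/-- derivative of `p(x) (1+x²)^c`. -/
lemma deriv_poly_rpow (p : Polynomial ℝ) (c : ℝ) (x : ℝ) :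
    deriv (fun x : ℝ => p.eval x * (1 + x ^ 2) ^ c) x =
      (p.derivative * (1 + Polynomial.X ^ 2) + Polynomial.C (2 * c) * Polynomial.X * p).eval x *
        (1 + x ^ 2) ^ (c - 1) := by
  have hx : (0 : ℝ) < 1 + x ^ 2 := by positivity
  have h1 : HasDerivAt (fun x : ℝ => 1 + x ^ 2) (2 * x) x := by
    simpa using ((hasDerivAt_pow 2 x).const_add 1)
  have h2 : HasDerivAt (fun y : ℝ => y ^ c) (c * (1 + x ^ 2) ^ (c - 1)) (1 + x ^ 2) :=
    Real.hasDerivAt_rpow_const (Or.inl hx.ne')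
  have h4 := (p.hasDerivAt x).mul (h2.comp x h1)
  simp only [Function.comp_def] at h4
  rw [(show HasDerivAt (fun x : ℝ => p.eval x * (1 + x ^ 2) ^ c) _ x from h4).deriv]
  have hc : (1 + x ^ 2) ^ c = (1 + x ^ 2) ^ (c - 1) * (1 + x ^ 2) := by
    rw [← Real.rpow_add_one hx.ne' (c - 1)]; ring_nf
  simp only [Polynomial.eval_add, Polynomial.eval_mul, Polynomial.eval_C, Polynomial.eval_X,
    Polynomial.eval_pow, Polynomial.eval_one]
  rw [hc]; ring

lemma iteratedDeriv_poly_rpow (k : ℕ) : ∀ (c : ℝ) (p : Polynomial ℝ), ∃ q : Polynomial ℝ,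
    iteratedDeriv k (fun x : ℝ => p.eval x * (1 + x ^ 2) ^ c) =
      fun x : ℝ => q.eval x * (1 + x ^ 2) ^ (c - k) := by
  induction k with
  | zero => intro c p; exact ⟨p, by simp⟩
  | succ k ih =>
    intro c p
    obtain ⟨q, hq⟩ := ih (c - 1)
      (p.derivative * (1 + Polynomial.X ^ 2) + Polynomial.C (2 * c) * Polynomial.X * p)
    refine ⟨q, ?_⟩
    rw [iteratedDeriv_succ']
    have : (deriv fun x : ℝ => p.eval x * (1 + x ^ 2) ^ c) =
        fun x : ℝ => (p.derivative * (1 + Polynomial.X ^ 2)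
          + Polynomial.C (2 * c) * Polynomial.X * p).eval x * (1 + x ^ 2) ^ (c - 1) :=
      funext (deriv_poly_rpow p c)
    rw [this, hq]
    have : c - 1 - (k : ℝ) = c - ((k : ℕ) + 1 : ℕ) := by push_cast; ring
    rw [this]

lemma poly_eval_bound (q : Polynomial ℝ) : ∃ C : ℝ, 0 ≤ C ∧
    ∀ x : ℝ, |q.eval x| ≤ C * (1 + |x|) ^ q.natDegree := by
  refine ⟨∑ i ∈ Finset.range (q.natDegree + 1), |q.coeff i|,
    Finset.sum_nonneg fun i _ => abs_nonneg _, fun x => ?_⟩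
  have h1 : (1 : ℝ) ≤ 1 + |x| := by simp [abs_nonneg]
  rw [Polynomial.eval_eq_sum_range, Finset.sum_mul]
  refine (Finset.abs_sum_le_sum_abs _ _).trans (Finset.sum_le_sum fun i hi => ?_)
  rw [abs_mul, _root_.abs_pow]
  have h2 : |x| ^ i ≤ (1 + |x|) ^ q.natDegree := by
    calc |x| ^ i ≤ (1 + |x|) ^ i := by
          exact pow_le_pow_left₀ (abs_nonneg x) (by linarith) i
      _ ≤ (1 + |x|) ^ q.natDegree :=
          pow_le_pow_right₀ h1 (Nat.lt_succ_iff.mp (Finset.mem_range.mp hi))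
  exact mul_le_mul_of_nonneg_left h2 (abs_nonneg _)

lemma rpow_weight_bound (e : ℝ) (x : ℝ) :
    (1 + x ^ 2) ^ e ≤ (1 + |x|) ^ (2 * ⌈e⌉₊) := by
  have hx : (0 : ℝ) < 1 + x ^ 2 := by positivity
  have h1 : (1 : ℝ) ≤ 1 + |x| := by simp [abs_nonneg]
  rcases le_or_gt e 0 with he | he
  · calc (1 + x ^ 2) ^ e ≤ 1 := Real.rpow_le_one_of_one_le_of_nonpos (by nlinarith) he
      _ ≤ (1 + |x|) ^ (2 * ⌈e⌉₊) := one_le_pow₀ h1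
  · have hle : 1 + x ^ 2 ≤ (1 + |x|) ^ (2 : ℕ) := by
      have := _root_.sq_abs x
      nlinarith [abs_nonneg x]
    calc (1 + x ^ 2) ^ e ≤ ((1 + |x|) ^ (2 : ℕ)) ^ e :=
          Real.rpow_le_rpow hx.le hle he.le
      _ = (1 + |x|) ^ ((2 : ℝ) * e) := by
          rw [← Real.rpow_natCast (1 + |x|) 2, ← Real.rpow_mul (by positivity)]
          norm_num
      _ ≤ (1 + |x|) ^ ((2 * ⌈e⌉₊ : ℕ) : ℝ) := by
          apply Real.rpow_le_rpow_of_exponent_le h1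
          push_cast
          have := Nat.le_ceil e
          nlinarith
      _ = (1 + |x|) ^ (2 * ⌈e⌉₊) := Real.rpow_natCast _ _

lemma hasTemperateGrowth_weight (c : ℝ) :
    Function.HasTemperateGrowth (fun x : ℝ => (1 + x ^ 2) ^ c) := by
  constructor
  · exact (contDiff_const.add (contDiff_id.pow 2)).rpow_const_of_ne
      (fun x => by positivity)
  · intro n
    obtain ⟨q, hq⟩ := iteratedDeriv_poly_rpow n c 1
    obtain ⟨C, hC0, hC⟩ := poly_eval_bound q
    refine ⟨q.natDegree + 2 * ⌈c - n⌉₊, C, fun x => ?_⟩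
    have hfun : (fun x : ℝ => (1 + x ^ 2) ^ c) =
        fun x : ℝ => (1 : Polynomial ℝ).eval x * (1 + x ^ 2) ^ c := by
      funext x; simp
    rw [norm_iteratedFDeriv_eq_norm_iteratedDeriv, hfun, hq]
    have hw : (0 : ℝ) ≤ (1 + x ^ 2) ^ (c - n) := Real.rpow_nonneg (by positivity) _
    rw [Real.norm_eq_abs, abs_mul, _root_.abs_of_nonneg hw, pow_add]
    calc |q.eval x| * (1 + x ^ 2) ^ (c - n)
        ≤ (C * (1 + |x|) ^ q.natDegree) * (1 + |x|) ^ (2 * ⌈c - n⌉₊) := by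
          apply mul_le_mul (hC x) (rpow_weight_bound _ x) hw
          positivity
      _ = C * ((1 + ‖x‖) ^ q.natDegree * (1 + ‖x‖) ^ (2 * ⌈c - n⌉₊)) := by
          rw [Real.norm_eq_abs]; ring

end weight

section maps

variable {E F : Type*} [NormedAddCommGroup E] [NormedSpace ℝ E]
  [NormedAddCommGroup F] [NormedSpace ℝ F]

/-- Postcomposition with a continuous linear map, as a CLM on Schwartz space. -/
noncomputable def pcomp (σ : E →L[ℝ] F) : SchwartzMap ℝ E →L[ℝ] SchwartzMap ℝ F :=
  mkCLM (𝕜 := ℝ) (fun f x => σ (f x))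
    (fun f g x => by simp)
    (fun a f x => by simp)
    (fun f => σ.contDiff.comp f.smooth')
    (by
      rintro ⟨k, m⟩
      refine ⟨{(k, m)}, ‖σ‖, norm_nonneg _, fun f x => ?_⟩
      have h1 : ‖iteratedFDeriv ℝ m (fun y => σ (f y)) x‖ ≤ ‖σ‖ * ‖iteratedFDeriv ℝ m f x‖ := by
        have := σ.iteratedFDeriv_comp_left ((f.smooth ⊤).contDiffAt (x := x)) (i := m) (mod_cast le_top)
        rw [show (fun y => σ (f y)) = σ ∘ f from rfl, this]
        exact σ.norm_compContinuousMultilinearMap_le _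
      calc ‖x‖ ^ k * ‖iteratedFDeriv ℝ m (fun y => σ (f y)) x‖
          ≤ ‖x‖ ^ k * (‖σ‖ * ‖iteratedFDeriv ℝ m f x‖) := by
            exact mul_le_mul_of_nonneg_left h1 (by positivity)
        _ = ‖σ‖ * (‖x‖ ^ k * ‖iteratedFDeriv ℝ m f x‖) := by ring
        _ ≤ ‖σ‖ * (Finset.sup {(k, m)} (schwartzSeminormFamily ℝ ℝ E)) f := by
            gcongr
            simpa [Finset.sup_singleton, schwartzSeminormFamily_apply] using
              f.le_seminorm ℝ k m x)

@[simp] lemma pcomp_apply (σ : E →L[ℝ] F) (f : SchwartzMap ℝ E) (x : ℝ) :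
    pcomp σ f x = σ (f x) := rfl

end maps

noncomputable def toC : SchwartzMap ℝ ℝ →L[ℝ] SchwartzMap ℝ ℂ := pcomp Complex.ofRealCLM
noncomputable def toR : SchwartzMap ℝ ℂ →L[ℝ] SchwartzMap ℝ ℝ := pcomp Complex.reCLM

/-- real-scalar multiplication by a temperate real function, on complex Schwartz maps -/
noncomputable def mulTemp {w : ℝ → ℝ} (hw : w.HasTemperateGrowth) :
    SchwartzMap ℝ ℂ →L[ℝ] SchwartzMap ℝ ℂ :=
  bilinLeftCLM ((ContinuousLinearMap.lsmul ℝ ℝ : ℝ →L[ℝ] ℂ →L[ℝ] ℂ).flip) hw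

@[simp] lemma mulTemp_apply {w : ℝ → ℝ} (hw : w.HasTemperateGrowth) (f : SchwartzMap ℝ ℂ)
    (x : ℝ) : mulTemp hw f x = w x • f x := rfl

noncomputable def lamC (s : ℝ) : SchwartzMap ℝ ℂ →L[ℝ] SchwartzMap ℝ ℂ :=
  ((FourierTransform.fourierCLE ℝ (SchwartzMap ℝ ℂ)).symm.toContinuousLinearMap).comp
    ((mulTemp (hasTemperateGrowth_weight (s / 2))).comp (fourierTransformCLM ℝ))

noncomputable def lamS (s : ℝ) : SchwartzMap ℝ ℝ →L[ℝ] SchwartzMap ℝ ℝ :=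
  toR.comp ((lamC s).comp toC)

lemma lamR_coe (s : ℝ) (f : SchwartzMap ℝ ℝ) : lamR s ⇑f = ⇑(lamS s f) := by
  funext x
  have h1 : ⇑(fourierTransformCLM ℝ (toC f)) = 𝓕 (fun y => (f y : ℂ)) := by
    rw [fourierTransformCLM_apply]; rfl
  have h2 : ⇑(mulTemp (hasTemperateGrowth_weight (s / 2)) (fourierTransformCLM ℝ (toC f))) =
      fun ξ => ((1 + ξ ^ 2) ^ (s / 2) : ℝ) • 𝓕 (fun y => (f y : ℂ)) ξ := by
    funext ξ
    rw [mulTemp_apply]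
    rw [h1]
  have h3 : ⇑((FourierTransform.fourierCLE ℝ (SchwartzMap ℝ ℂ)).symm
      (mulTemp (hasTemperateGrowth_weight (s / 2)) (fourierTransformCLM ℝ (toC f)))) =
      𝓕⁻ (fun ξ => ((1 + ξ ^ 2) ^ (s / 2) : ℝ) • 𝓕 (fun y => (f y : ℂ)) ξ) := by
    rw [FourierTransform.fourierCLE_symm_apply, SchwartzMap.fourierInv_coe, h2]
  show (𝓕⁻ (fun ξ => ((1 + ξ ^ 2) ^ (s / 2) : ℝ) • 𝓕 (fun y => (f y : ℂ)) ξ) x).re =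
      ((lamC s (toC f)) x).re
  have h4 : (lamC s (toC f)) x = ((FourierTransform.fourierCLE ℝ (SchwartzMap ℝ ℂ)).symm
      (mulTemp (hasTemperateGrowth_weight (s / 2)) (fourierTransformCLM ℝ (toC f)))) x := rfl
  rw [h4, congrFun h3 x]


@[simp] lemma toC_apply (f : SchwartzMap ℝ ℝ) (x : ℝ) : toC f x = (f x : ℂ) := rfl
@[simp] lemma toR_apply (f : SchwartzMap ℝ ℂ) (x : ℝ) : toR f x = (f x).re := rfl


-- derivative commutations
lemma toC_deriv (f : SchwartzMap ℝ ℝ) : toC (derivCLM ℝ ℝ f) = derivCLM ℝ ℂ (toC f) := by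
  ext x
  rw [toC_apply, derivCLM_apply, derivCLM_apply]
  have h : deriv (fun y => ((f y : ℂ))) x = Complex.ofReal (deriv (⇑f) x) := by
    have := (Complex.ofRealCLM.hasFDerivAt.comp_hasDerivAt x
      (f.differentiableAt.hasDerivAt)).deriv
    simpa [Function.comp_def] using this
  rw [← h]
  rfl

lemma toR_deriv (g : SchwartzMap ℝ ℂ) : toR (derivCLM ℝ ℂ g) = derivCLM ℝ ℝ (toR g) := by
  ext x
  rw [toR_apply, derivCLM_apply, derivCLM_apply]
  have h : deriv (fun y => (g y).re) x = (deriv (⇑g) x).re := by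
    have := (Complex.reCLM.hasFDerivAt.comp_hasDerivAt x
      (g.differentiableAt.hasDerivAt)).deriv
    simpa [Function.comp_def] using this
  rw [← h]
  rfl

lemma lamC_coe (s : ℝ) (g : SchwartzMap ℝ ℂ) :
    ⇑(lamC s g) = 𝓕⁻ ⇑(mulTemp (hasTemperateGrowth_weight (s / 2))
      (fourierTransformCLM ℝ g)) := by
  have : lamC s g = (FourierTransform.fourierCLE ℝ (SchwartzMap ℝ ℂ)).symm
      (mulTemp (hasTemperateGrowth_weight (s / 2)) (fourierTransformCLM ℝ g)) := rfl
  rw [this, FourierTransform.fourierCLE_symm_apply, SchwartzMap.fourierInv_coe]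

lemma lamC_deriv (s : ℝ) (g : SchwartzMap ℝ ℂ) :
    lamC s (derivCLM ℝ ℂ g) = derivCLM ℝ ℂ (lamC s g) := by
  have hw := hasTemperateGrowth_weight (s / 2)
  set W : ℝ → ℝ := fun ξ : ℝ => (1 + ξ ^ 2) ^ (s / 2) with hWdef
  set A : ℝ → ℂ := fun ξ : ℝ => W ξ • 𝓕 (⇑g) ξ with hAdef
  have hAcoe : ⇑(mulTemp hw (fourierTransformCLM ℝ g)) = A := by
    funext ξ; rw [mulTemp_apply, fourierTransformCLM_apply, SchwartzMap.fourier_coe]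
  have hAint : Integrable A := by
    rw [← hAcoe]; exact SchwartzMap.integrable _
  have hxA : Integrable (fun ξ : ℝ => ξ • A ξ) := by
    have heq : (fun ξ : ℝ => ξ • A ξ) = ⇑(mulTemp (ContinuousLinearMap.hasTemperateGrowth
        (ContinuousLinearMap.id ℝ ℝ)) (mulTemp hw (fourierTransformCLM ℝ g))) := by
      funext ξ; rw [mulTemp_apply, hAcoe]; simp
    rw [heq]
    exact SchwartzMap.integrable _
  ext x
  rw [derivCLM_apply]
  have hL : ⇑(lamC s (derivCLM ℝ ℂ g)) =
      𝓕⁻ (fun ξ : ℝ => (2 * (π : ℂ) * I * (ξ : ℂ)) • A ξ) := by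
    rw [lamC_coe]
    have harg : ⇑(mulTemp (hasTemperateGrowth_weight (s / 2))
        (fourierTransformCLM ℝ (derivCLM ℝ ℂ g))) =
        fun ξ : ℝ => (2 * (π : ℂ) * I * (ξ : ℂ)) • A ξ := by
      funext ξ
      rw [mulTemp_apply, fourierTransformCLM_apply, SchwartzMap.fourier_coe]
      have hder : ⇑(derivCLM ℝ ℂ g) = deriv ⇑g := by funext y; rw [derivCLM_apply]
      rw [hder, Real.fourier_deriv g.integrable g.differentiable
        (by rw [← hder]; exact SchwartzMap.integrable _)]
      rw [hAdef]
      exact smul_comm _ _ _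
    rw [harg]
  have hR : deriv (⇑(lamC s g)) x =
      𝓕⁻ (fun ξ : ℝ => (2 * (π : ℂ) * I * (ξ : ℂ)) • A ξ) x := by
    rw [lamC_coe, hAcoe]
    have h1 : 𝓕⁻ A = 𝓕 A ∘ Neg.neg :=
      funext fun y => Real.fourierInv_eq_fourier_neg A y
    rw [h1]
    have h2 := Real.hasDerivAt_fourier hAint hxA (-x)
    have hneg : HasDerivAt (Neg.neg : ℝ → ℝ) (-1 : ℝ) x := by
      exact hasDerivAt_neg x
    have h3 := h2.scomp x hneg
    rw [h3.deriv]
    have h5 : 𝓕 (fun ξ : ℝ => (-2 * (π : ℂ) * I * (ξ : ℂ)) • A ξ) (-x) =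
        -𝓕 (fun ξ : ℝ => (2 * (π : ℂ) * I * (ξ : ℂ)) • A ξ) (-x) := by
      simp only [Real.fourier_eq]
      rw [← integral_neg]
      congr 1
      funext ξ
      have : (-2 * (π : ℂ) * I * (ξ : ℂ)) • A ξ = -((2 * (π : ℂ) * I * (ξ : ℂ)) • A ξ) := by
        rw [← neg_smul]; ring_nf
      rw [this]
      simp
    have h6 : 𝓕 (fun x_1 : ℝ => (-2 * (π : ℂ) * I * (x_1 : ℂ)) • A x_1) (-x) =
        𝓕 (fun ξ : ℝ => (-2 * (π : ℂ) * I * (ξ : ℂ)) • A ξ) (-x) := rfl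
    rw [h6, h5, Real.fourierInv_eq_fourier_neg]
    simp
  rw [hR, ← hL]

lemma lamS_deriv (s : ℝ) (f : SchwartzMap ℝ ℝ) :
    lamS s (derivCLM ℝ ℝ f) = derivCLM ℝ ℝ (lamS s f) := by
  have h0 : ∀ g : SchwartzMap ℝ ℝ, lamS s g = toR (lamC s (toC g)) := fun g => rfl
  rw [h0, h0, toC_deriv, lamC_deriv, toR_deriv]


-- the Schwartz-level differential operator
noncomputable def Pmap (n : ℕ) (a : ℕ → ℝ) (f : SchwartzMap ℝ ℝ) : SchwartzMap ℝ ℝ :=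
  ∑ i ∈ Finset.range (n + 1),
    a i • (((derivCLM ℝ ℝ : SchwartzMap ℝ ℝ →L[ℝ] SchwartzMap ℝ ℝ) ^ i) f)

lemma schwartz_sum_apply {ι : Type*} (s : Finset ι) (F : ι → SchwartzMap ℝ ℝ) (x : ℝ) :
    (∑ i ∈ s, F i) x = ∑ i ∈ s, F i x := by
  classical
  induction s using Finset.cons_induction with
  | empty => simp [SchwartzMap.coe_zero]
  | cons i s hi ih => rw [Finset.sum_cons, Finset.sum_cons, SchwartzMap.add_apply, ih]

lemma derivCLM_pow_coe (i : ℕ) (f : SchwartzMap ℝ ℝ) :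
    iteratedDeriv i ⇑f = ⇑(((derivCLM ℝ ℝ : SchwartzMap ℝ ℝ →L[ℝ] SchwartzMap ℝ ℝ) ^ i) f) := by
  induction i generalizing f with
  | zero => simp [iteratedDeriv_zero]
  | succ i ih =>
    rw [iteratedDeriv_succ']
    have h1 : deriv ⇑f = ⇑(derivCLM ℝ ℝ f) := by funext y; rw [derivCLM_apply]
    rw [h1, ih (derivCLM ℝ ℝ f), pow_succ]
    rfl

lemma diffOp_coe (n : ℕ) (a : ℕ → ℝ) (f : SchwartzMap ℝ ℝ) :
    diffOp n a ⇑f = ⇑(Pmap n a f) := by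
  funext x
  rw [diffOp, Pmap, schwartz_sum_apply]
  refine Finset.sum_congr rfl fun i _ => ?_
  rw [derivCLM_pow_coe i f, SchwartzMap.smul_apply]
  simp

lemma lamS_pow_comm (s : ℝ) (i : ℕ) (f : SchwartzMap ℝ ℝ) :
    lamS s (((derivCLM ℝ ℝ : SchwartzMap ℝ ℝ →L[ℝ] SchwartzMap ℝ ℝ) ^ i) f) =
      ((derivCLM ℝ ℝ : SchwartzMap ℝ ℝ →L[ℝ] SchwartzMap ℝ ℝ) ^ i) (lamS s f) := by
  induction i generalizing f with
  | zero => simp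
  | succ i ih =>
    rw [pow_succ]
    rw [ContinuousLinearMap.mul_apply, ContinuousLinearMap.mul_apply, ih, lamS_deriv]

lemma lamS_Pmap_comm (s : ℝ) (n : ℕ) (a : ℕ → ℝ) (f : SchwartzMap ℝ ℝ) :
    lamS s (Pmap n a f) = Pmap n a (lamS s f) := by
  rw [Pmap, Pmap, map_sum]
  refine Finset.sum_congr rfl fun i _ => ?_
  rw [_root_.map_smul, lamS_pow_comm]

lemma schwartzMap_hasTemperateGrowth (f : SchwartzMap ℝ ℝ) :
    Function.HasTemperateGrowth ⇑f := by
  refine ⟨f.smooth', fun m => ⟨0, SchwartzMap.seminorm ℝ 0 m f, fun x => ?_⟩⟩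
  rw [pow_zero, mul_one]
  exact f.norm_iteratedFDeriv_le_seminorm ℝ m x

-- integrability helpers
lemma schwartz_bound (f : SchwartzMap ℝ ℝ) : ∃ C : ℝ, ∀ x : ℝ, ‖f x‖ ≤ C :=
  ⟨‖f.toBoundedContinuousFunction‖,
    fun x => f.toBoundedContinuousFunction.norm_coe_le_norm x⟩

lemma schwartz_int2 (f g : SchwartzMap ℝ ℝ) : Integrable (fun x => f x * g x) :=
  g.integrable.bdd_mul f.continuous.aestronglyMeasurable (ae_of_all _ (schwartz_bound f).choose_spec)

lemma schwartz_int3 (h f g : SchwartzMap ℝ ℝ) :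
    Integrable (fun x => h x * f x * g x) := by
  simp_rw [mul_assoc]
  exact (schwartz_int2 f g).bdd_mul h.continuous.aestronglyMeasurable (ae_of_all _ (schwartz_bound h).choose_spec)

/-- For a constant-coefficient skew-symmetric differential operator `P` and
smooth rapidly decaying `h, u`,
`(Λ^s(h P u), Λ^s u) = ([Λ^s,h] P u, Λ^s u) - (1/2)([P,h] Λ^s u, Λ^s u)`. -/
theorem stmt9 (s : ℝ) (n : ℕ) (a : ℕ → ℝ)
    (hskew : ∀ f g : SchwartzMap ℝ ℝ,
      ∫ x : ℝ, diffOp n a f x * g x = -∫ x : ℝ, f x * diffOp n a g x)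
    (h u : SchwartzMap ℝ ℝ) :
    ∫ x : ℝ, lamR s (fun y => h y * diffOp n a u y) x * lamR s u x =
      (∫ x : ℝ, (lamR s (fun y => h y * diffOp n a u y) x - h x * lamR s (diffOp n a u) x) *
          lamR s u x)
      - (1 / 2) * ∫ x : ℝ,
          (diffOp n a (fun y => h y * lamR s u y) x - h x * diffOp n a (lamR s u) x) *
            lamR s u x := by
  have hh := schwartzMap_hasTemperateGrowth h
  set Hmul : SchwartzMap ℝ ℝ →L[ℝ] SchwartzMap ℝ ℝ :=
    bilinLeftCLM (ContinuousLinearMap.mul ℝ ℝ) hh with hHmul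
  have hHmul_apply : ∀ (f : SchwartzMap ℝ ℝ) (x : ℝ), Hmul f x = f x * h x := fun f x => rfl
  set v : SchwartzMap ℝ ℝ := lamS s u with hv
  -- rewrite all the lamR/diffOp into Schwartz maps
  have e1 : (fun y => h y * diffOp n a (⇑u) y) = ⇑(Hmul (Pmap n a u)) := by
    funext y
    rw [diffOp_coe, hHmul_apply, mul_comm]
  have e2 : lamR s ⇑u = ⇑v := lamR_coe s u
  have e3 : (fun y => h y * v y) = ⇑(Hmul v) := by
    funext y; rw [hHmul_apply, mul_comm]
  rw [e1, lamR_coe s (Hmul (Pmap n a u)), diffOp_coe n a u,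
    lamR_coe s (Pmap n a u), lamS_Pmap_comm, e2, e3,
    diffOp_coe n a (Hmul v), diffOp_coe n a v]
  set q1 : SchwartzMap ℝ ℝ := lamS s (Hmul (Pmap n a u)) with hq1
  set Pv : SchwartzMap ℝ ℝ := Pmap n a v with hPv
  set PHv : SchwartzMap ℝ ℝ := Pmap n a (Hmul v) with hPHv
  -- skew-symmetry fact
  have hC : ∫ x : ℝ, PHv x * v x = -∫ x : ℝ, h x * Pv x * v x := by
    have := hskew (Hmul v) v
    rw [diffOp_coe n a (Hmul v), diffOp_coe n a v] at this
    rw [this]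
    congr 1
    apply integral_congr_ae
    filter_upwards with x
    rw [hHmul_apply]
    ring
  have hsplit1 : ∫ x : ℝ, (q1 x - h x * Pv x) * v x =
      (∫ x : ℝ, q1 x * v x) - ∫ x : ℝ, h x * Pv x * v x := by
    simp_rw [sub_mul]
    rw [integral_sub (schwartz_int2 q1 v)]
    exact schwartz_int3 h Pv v
  have hsplit2 : ∫ x : ℝ, (PHv x - h x * Pv x) * v x =
      (∫ x : ℝ, PHv x * v x) - ∫ x : ℝ, h x * Pv x * v x := by
    simp_rw [sub_mul]
    rw [integral_sub (schwartz_int2 PHv v)]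
    exact schwartz_int3 h Pv v
  rw [hsplit1, hsplit2, hC]
  ring
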